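/- For 0 ≤ a, b ≤ 1 with (a,b) ≠ (0,0), the Lorenz distance between the extremal curves ℓ_a⁻ and ℓ_b⁺ equals ((1-a)b² + (1-b)a²)/(a + b - ab), i.e., 2∫₀¹ |ℓ_a⁻(t) - ℓ_b⁺(t)| dt = ((1-a)b² + (1-b)a²)/(a + b - ab). -/

import Mathlib

open Set

/-- The curve `ℓ_a⁻(t) = max {0, (t-a)/(1-a)}` for `a < 1`, with the convention
that `ℓ₁⁻` is the indicator of `{1}` (perfect inequality curve). -/
noncomputable def laMinus (a : ℝ) : ℝ → ℝ :=
  fun t => if a = 1 then (if t = 1 then 1 else 0) else max 0 ((t - a) / (1 - a))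

/-- The curve `ℓ_b⁺`: `ℓ_b⁺(t) = (1-b)t` on `[0,1)` and `ℓ_b⁺(1) = 1`. -/
noncomputable def lbPlus (b : ℝ) : ℝ → ℝ := fun t => if t = 1 then 1 else (1 - b) * t

private lemma int_affine (x y c d : ℝ) :
    ∫ t in x..y, (c*t + d) = c*(y^2-x^2)/2 + d*(y-x) := by
  rw [intervalIntegral.integral_add (Continuous.intervalIntegrable (by continuity) _ _)
    intervalIntegrable_const, intervalIntegral.integral_const_mul, integral_id,
    intervalIntegral.integral_const, smul_eq_mul]
  ring

private lemma ae_ne_one : ∀ᵐ t : ℝ, t ≠ 1 := by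
  have : MeasureTheory.volume ({1} : Set ℝ) = 0 := Real.volume_singleton
  exact MeasureTheory.ae_iff.mpr (by simpa using this)

/-- For `0 ≤ a, b ≤ 1` with `(a,b) ≠ (0,0)`,
`2∫₀¹ |ℓ_a⁻ - ℓ_b⁺| = ((1-a)b² + (1-b)a²)/(a + b - ab)`. -/
theorem dist_laMinus_lbPlus (a b : ℝ) (ha : a ∈ Icc (0:ℝ) 1) (hb : b ∈ Icc (0:ℝ) 1)
    (hab : ¬(a = 0 ∧ b = 0)) :
    2 * ∫ t in (0:ℝ)..1, |laMinus a t - lbPlus b t| =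
      ((1 - a) * b ^ 2 + (1 - b) * a ^ 2) / (a + b - a * b) := by
  obtain ⟨ha0, ha1⟩ := ha
  obtain ⟨hb0, hb1⟩ := hb
  by_cases hA : a = 1
  · subst hA
    have hcong : ∫ t in (0:ℝ)..1, |laMinus 1 t - lbPlus b t|
        = ∫ t in (0:ℝ)..1, ((1-b)*t + 0) := by
      apply intervalIntegral.integral_congr_ae
      filter_upwards [ae_ne_one] with t ht hmem
      rw [uIoc_of_le (by norm_num : (0:ℝ) ≤ 1)] at hmem
      have ht0 : 0 < t := hmem.1
      have e1 : laMinus 1 t = 0 := by simp [laMinus, ht]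
      have e2 : lbPlus b t = (1-b)*t := by simp [lbPlus, ht]
      rw [e1, e2, abs_of_nonpos (by nlinarith)]
      ring
    rw [hcong, int_affine]
    ring_nf
  · have ha1' : a < 1 := lt_of_le_of_ne ha1 hA
    have h1a : 0 < 1 - a := by linarith
    have hD : 0 < a + b - a * b := by
      rcases lt_or_eq_of_le hb0 with h | h
      · nlinarith
      · have haa : 0 < a := lt_of_le_of_ne ha0 (fun h' => hab ⟨h'.symm, h.symm⟩)
        nlinarith
    set t0 : ℝ := a / (a + b - a * b) with ht0def
    have ht0a : a ≤ t0 := by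
      rw [ht0def, le_div_iff₀ hD]
      nlinarith [mul_nonneg (mul_nonneg ha0 h1a.le) (sub_nonneg.mpr hb1)]
    have ht01 : t0 ≤ 1 := by
      rw [ht0def, div_le_one hD]
      nlinarith [mul_nonneg hb0 h1a.le]
    have hcong : ∫ t in (0:ℝ)..1, |laMinus a t - lbPlus b t|
        = ∫ t in (0:ℝ)..1, |max 0 ((t-a)/(1-a)) - (1-b)*t| := by
      apply intervalIntegral.integral_congr_ae
      filter_upwards [ae_ne_one] with t ht _
      simp [laMinus, lbPlus, hA, ht]
    have hF : Continuous fun t : ℝ => |max 0 ((t-a)/(1-a)) - (1-b)*t| := by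
      apply Continuous.abs
      exact ((continuous_const.max ((continuous_id.sub continuous_const).div_const _)).sub
        (continuous_const.mul continuous_id))
    have hint : ∀ x y : ℝ, IntervalIntegrable
        (fun t : ℝ => |max 0 ((t-a)/(1-a)) - (1-b)*t|) MeasureTheory.volume x y :=
      fun x y => hF.intervalIntegrable x y
    have e1 := intervalIntegral.integral_add_adjacent_intervals (hint 0 a) (hint a 1)
    have e2 := intervalIntegral.integral_add_adjacent_intervals (hint a t0) (hint t0 1)
    have p1 : ∫ t in (0:ℝ)..a, |max 0 ((t-a)/(1-a)) - (1-b)*t|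
        = ∫ t in (0:ℝ)..a, ((1-b)*t + 0) := by
      apply intervalIntegral.integral_congr
      intro t htt
      rw [uIcc_of_le ha0] at htt
      obtain ⟨ht0, hta⟩ := htt
      have hmax : max 0 ((t-a)/(1-a)) = 0 :=
        max_eq_left (div_nonpos_of_nonpos_of_nonneg (by linarith) (by linarith))
      beta_reduce
      rw [hmax, abs_of_nonpos (by nlinarith)]
      ring
    have p2 : ∫ t in a..t0, |max 0 ((t-a)/(1-a)) - (1-b)*t|
        = ∫ t in a..t0, (((1-b) - 1/(1-a))*t + a/(1-a)) := by
      apply intervalIntegral.integral_congr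
      intro t htt
      rw [uIcc_of_le ht0a] at htt
      obtain ⟨hat, htt0⟩ := htt
      have hmax : max 0 ((t-a)/(1-a)) = (t-a)/(1-a) :=
        max_eq_right (div_nonneg (by linarith) (by linarith))
      have htD : t * (a + b - a * b) ≤ a := (le_div_iff₀ hD).mp htt0
      have hsign : (t-a)/(1-a) - (1-b)*t ≤ 0 := by
        rw [sub_nonpos, div_le_iff₀ h1a]
        nlinarith
      beta_reduce
      rw [hmax, abs_of_nonpos hsign]
      field_simp
      ring
    have p3 : ∫ t in t0..1, |max 0 ((t-a)/(1-a)) - (1-b)*t|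
        = ∫ t in t0..1, ((1/(1-a) - (1-b))*t + (-(a/(1-a)))) := by
      apply intervalIntegral.integral_congr
      intro t htt
      rw [uIcc_of_le ht01] at htt
      obtain ⟨ht0t, ht1⟩ := htt
      have hat : a ≤ t := le_trans ht0a ht0t
      have hmax : max 0 ((t-a)/(1-a)) = (t-a)/(1-a) :=
        max_eq_right (div_nonneg (by linarith) (by linarith))
      have htD : a ≤ t * (a + b - a * b) := (div_le_iff₀ hD).mp ht0t
      have hsign : 0 ≤ (t-a)/(1-a) - (1-b)*t := by
        rw [sub_nonneg, le_div_iff₀ h1a]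
        nlinarith
      beta_reduce
      rw [hmax, abs_of_nonneg hsign]
      field_simp
      ring
    rw [hcong]
    have hsum : ∫ t in (0:ℝ)..1, |max 0 ((t-a)/(1-a)) - (1-b)*t|
        = (∫ t in (0:ℝ)..a, |max 0 ((t-a)/(1-a)) - (1-b)*t|)
          + (∫ t in a..t0, |max 0 ((t-a)/(1-a)) - (1-b)*t|)
          + (∫ t in t0..1, |max 0 ((t-a)/(1-a)) - (1-b)*t|) := by
      rw [add_assoc, e2, e1]
    rw [hsum, p1, p2, p3, int_affine, int_affine, int_affine, ht0def]
    have h1a' : (1:ℝ) - a ≠ 0 := ne_of_gt h1a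
    have hD' : a + b - a * b ≠ 0 := ne_of_gt hD
    field_simp [show a + b - b * a ≠ 0 by rw [mul_comm]; exact hD']
    ring
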